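/- Let G be a connected simple graph with root r and let H be a connected graph obtained by deleting an edge of DFS(G) from G. Then κ(H, DFS(H)) = g - 1, where g = |E(G)| - |V(G)| + 1 is the circuit rank of G. -/

import Mathlib

open Finset

namespace PFG

variable {n : ℕ}

/-- `deg_{Sᶜ}(i)`: the number of edges `{i,j}` of `G` with `j ∉ S`. -/
noncomputable def sDeg (G : SimpleGraph (Fin (n+1))) (S : Finset (Fin (n+1))) (i : Fin (n+1)) : ℕ :=
  Set.ncard {j : Fin (n+1) | G.Adj i j ∧ j ∉ S}

/-- `P` is a parking function for `G` with respect to the root `r`: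
for every nonempty `S ⊆ V \ {r}` there is `i ∈ S` with `P i < deg_{Sᶜ}(i)`. -/
def IsParkingFunction (G : SimpleGraph (Fin (n+1))) (r : Fin (n+1))
    (P : Fin (n+1) → ℕ) : Prop :=
  ∀ S : Finset (Fin (n+1)), S.Nonempty → r ∉ S → ∃ i ∈ S, P i < sDeg G S i

/-- The degree of a parking function: the sum of its values over non-root vertices. -/
def degPF (r : Fin (n+1)) (P : Fin (n+1) → ℕ) : ℕ := ∑ v ∈ univ.erase r, P v

/-- A spanning tree of `G` rooted at `r`, encoded by its parent function:
each non-root vertex is adjacent (in `G`) to its parent, and iterating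
the parent map from any vertex reaches the root. -/
structure RootedSpanningTree (G : SimpleGraph (Fin (n+1))) (r : Fin (n+1)) where
  parent : Fin (n+1) → Fin (n+1)
  parent_root : parent r = r
  adj_parent : ∀ v, v ≠ r → G.Adj (parent v) v
  reaches_root : ∀ v, ∃ k, parent^[k] v = r

/-- `i` is a (proper) ancestor of `j` in the rooted tree with parent map `par`. -/
def IsAncestor (par : Fin (n+1) → Fin (n+1)) (i j : Fin (n+1)) : Prop :=
  ∃ k, 0 < k ∧ par^[k] j = i

/-- An inversion: `i` is an ancestor of `j` and `i > j`. -/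
def IsInversion (par : Fin (n+1) → Fin (n+1)) (i j : Fin (n+1)) : Prop :=
  IsAncestor par i j ∧ j < i

/-- A κ-inversion: an inversion `(i,j)` such that moreover `i` is not the
root and the parent of `i` is adjacent to `j` in `G`. -/
def IsKappaInversion (G : SimpleGraph (Fin (n+1))) (r : Fin (n+1))
    (par : Fin (n+1) → Fin (n+1)) (i j : Fin (n+1)) : Prop :=
  IsAncestor par i j ∧ j < i ∧ i ≠ r ∧ G.Adj (par i) j

/-- the κ-number: the number of κ-inversions. -/
noncomputable def kappaNum (G : SimpleGraph (Fin (n+1))) (r : Fin (n+1))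
    (par : Fin (n+1) → Fin (n+1)) : ℕ :=
  Set.ncard {p : Fin (n+1) × Fin (n+1) | IsKappaInversion G r par p.1 p.2}

/-- the number of inversions. -/
noncomputable def invNum (par : Fin (n+1) → Fin (n+1)) : ℕ :=
  Set.ncard {p : Fin (n+1) × Fin (n+1) | IsInversion par p.1 p.2}

open Classical in
/-- The neighbors of `i` in `G`, listed in decreasing order. -/
noncomputable def nbrs (G : SimpleGraph (Fin (n+1))) (i : Fin (n+1)) : List (Fin (n+1)) :=
  ((univ.filter (fun j => G.Adj i j)).sort (· ≤ ·)).reverse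

/-- One step of depth-first search from vertex `i`: scan the neighbors of `i`
in decreasing order; each unvisited neighbor `j` is visited, gets parent `i`,
and the search recurses from `j`.  The state is the pair
(visited vertices, parent map). -/
noncomputable def dfsStep (G : SimpleGraph (Fin (n+1))) :
    ℕ → Fin (n+1) → Finset (Fin (n+1)) × (Fin (n+1) → Fin (n+1)) →
      Finset (Fin (n+1)) × (Fin (n+1) → Fin (n+1))
  | 0, _, st => st
  | (fuel+1), i, st =>
      (nbrs G i).foldl
        (fun st j =>
          if j ∈ st.1 then st
          else dfsStep G fuel j (insert j st.1, Function.update st.2 j i)) st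

/-- The parent map of the depth-first search tree of `G` rooted at `r`,
visiting neighbors in decreasing numerical order. -/
noncomputable def dfsParent (G : SimpleGraph (Fin (n+1))) (r : Fin (n+1)) :
    Fin (n+1) → Fin (n+1) :=
  (dfsStep G (n+1) r ({r}, fun _ => r)).2

/-- The set of edges of the rooted tree given by parent map `par`. -/
def treeEdges (r : Fin (n+1)) (par : Fin (n+1) → Fin (n+1)) : Set (Sym2 (Fin (n+1))) :=
  {e | ∃ v, v ≠ r ∧ e = s(par v, v)}

end PFG

open Finset

namespace PFGAux

variable {n : ℕ}

/-- chain from `j` up to `x` via `par`, with strictly-intermediate elements in `D`. -/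
def DChain (par : Fin (n+1) → Fin (n+1)) (D : Set (Fin (n+1))) (x j : Fin (n+1)) : Prop :=
  ∃ k, 0 < k ∧ par^[k] j = x ∧ ∀ m, 0 < m → m < k → par^[m] j ∈ D

lemma DChain.mono {par : Fin (n+1) → Fin (n+1)} {D D' : Set (Fin (n+1))} {x j : Fin (n+1)}
    (h : DChain par D x j) (hD : D ⊆ D') : DChain par D' x j := by
  obtain ⟨k, hk, hkx, hmid⟩ := h
  exact ⟨k, hk, hkx, fun m h0 hm => hD (hmid m h0 hm)⟩

lemma DChain.transfer {par par' : Fin (n+1) → Fin (n+1)} {D S : Set (Fin (n+1))}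
    {x j : Fin (n+1)} (h : DChain par D x j) (hDS : D ⊆ S) (hj : j ∈ S)
    (hS : ∀ v ∈ S, par' v = par v) : DChain par' D x j := by
  obtain ⟨k, hk, hkx, hmid⟩ := h
  have key : ∀ m, m ≤ k → par'^[m] j = par^[m] j := by
    intro m hm
    induction m with
    | zero => rfl
    | succ m ih =>
      have hmk : m < k := Nat.lt_of_succ_le hm
      rw [Function.iterate_succ_apply', Function.iterate_succ_apply', ih hmk.le]
      apply hS
      rcases Nat.eq_zero_or_pos m with h0 | h0
      · subst h0; simpa using hj
      · exact hDS (hmid m h0 hmk)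
  exact ⟨k, hk, by rw [key k le_rfl]; exact hkx,
    fun m h0 hm => by rw [key m hm.le]; exact hmid m h0 hm⟩

lemma DChain.extend {par : Fin (n+1) → Fin (n+1)} {D D' : Set (Fin (n+1))}
    {x j y : Fin (n+1)} (h : DChain par D x j) (hD : D ⊆ D') (hx : x ∈ D')
    (hy : par x = y) : DChain par D' y j := by
  obtain ⟨k, hk, hkx, hmid⟩ := h
  refine ⟨k + 1, Nat.succ_pos _, ?_, ?_⟩
  · rw [Function.iterate_succ_apply', hkx, hy]
  · intro m h0 hm
    rcases Nat.lt_or_ge m k with h' | h'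
    · exact hD (hmid m h0 h')
    · have : m = k := le_antisymm (Nat.lt_succ_iff.mp hm) h'
      subst this; rw [hkx]; exact hx

lemma DChain.head {par : Fin (n+1) → Fin (n+1)} {D : Set (Fin (n+1))} {x j : Fin (n+1)}
    (h : DChain par D x j) : par j ∈ D ∨ par j = x := by
  obtain ⟨k, hk, hkx, hmid⟩ := h
  rcases Nat.lt_or_ge 1 k with h' | h'
  · exact Or.inl (by simpa using hmid 1 one_pos h')
  · have : k = 1 := le_antisymm h' hk
    subst this; exact Or.inr (by simpa using hkx)

lemma DChain.localize {par : Fin (n+1) → Fin (n+1)} {D A : Set (Fin (n+1))}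
    {s0 x j : Fin (n+1)} (hA : ∀ v ∈ A, par v ∈ A ∨ par v = s0)
    (hnext : par s0 ∉ D) (hxD : x ∈ D) (hj : j ∈ A) (h : DChain par D x j) :
    (x ∈ A ∨ x = s0) ∧ DChain par A x j := by
  obtain ⟨k, hk, hkx, hmid⟩ := h
  have key : ∀ m, m < k → par^[m] j ∈ A := by
    intro m
    induction m with
    | zero => intro _; simpa using hj
    | succ m ih =>
      intro hmk
      have hmA : par^[m] j ∈ A := ih (Nat.lt_of_succ_lt hmk)
      rcases hA _ hmA with h' | h'
      · rw [Function.iterate_succ_apply']; exact h'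
      · exfalso
        have hs : par^[m+1] j = s0 := by rw [Function.iterate_succ_apply']; exact h'
        have h2 : par^[m+2] j = par s0 := by
          rw [Function.iterate_succ_apply', hs]
        rcases Nat.lt_or_ge (m+2) k with h'' | h''
        · exact hnext (h2 ▸ hmid (m+2) (by omega) h'')
        · have : m + 2 = k := le_antisymm (by omega) h''
          apply hnext; rw [← h2, this, hkx]; exact hxD
  constructor
  · have h1 : par^[k-1] j ∈ A := key (k-1) (by omega)
    have h2 : x = par (par^[k-1] j) := by
      have hkk : k - 1 + 1 = k := by omega
      have := Function.iterate_succ_apply' par (k-1) j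
      rw [Nat.succ_eq_add_one, hkk, hkx] at this
      exact this
    rcases hA _ h1 with h' | h'
    · exact Or.inl (h2 ▸ h')
    · exact Or.inr (h2 ▸ h')
  · exact ⟨k, hk, hkx, fun m h0 hm => key m hm⟩

end PFGAux
open Finset PFG

namespace PFGAux

variable {n : ℕ}

lemma mem_nbrs {G : SimpleGraph (Fin (n+1))} {i j : Fin (n+1)} :
    j ∈ PFG.nbrs G i ↔ G.Adj i j := by
  classical
  simp [PFG.nbrs]

lemma nbrs_sorted (G : SimpleGraph (Fin (n+1))) (i : Fin (n+1)) :
    (PFG.nbrs G i).Pairwise (· > ·) := by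
  classical
  unfold PFG.nbrs
  exact List.pairwise_reverse.mpr (by simpa using (Finset.sortedLT_sort _).pairwise)

abbrev St (n : ℕ) := Finset (Fin (n+1)) × (Fin (n+1) → Fin (n+1))

def Dset (st st' : St n) : Set (Fin (n+1)) := {u | u ∈ st'.1 ∧ u ∉ st.1}

structure Post (G : SimpleGraph (Fin (n+1))) (i : Fin (n+1)) (st st' : St n) : Prop where
  mono : st.1 ⊆ st'.1
  stab : ∀ v ∈ st.1, st'.2 v = st.2 v
  parmem : ∀ v, st'.2 v ∈ st'.1
  adj : ∀ v, v ∈ st'.1 → v ∉ st.1 → G.Adj (st'.2 v) v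
  chain : ∀ v, v ∈ st'.1 → v ∉ st.1 → DChain st'.2 (Dset st st') i v
  nbr : ∀ w, G.Adj i w → w ∈ st'.1
  closure : ∀ v, v ∈ st'.1 → v ∉ st.1 → ∀ w, G.Adj v w → w ∈ st'.1
  comp : ∀ u, u ∈ st'.1 → u ∉ st.1 → ∀ w, w ∈ st'.1 → w ∉ st.1 → G.Adj u w →
    DChain st'.2 (Dset st st') u w ∨ DChain st'.2 (Dset st st') w u
  ord : ∀ a x j, (a = i ∨ a ∈ Dset st st') → x ∈ Dset st st' → st'.2 x = a →
    j ∈ Dset st st' → DChain st'.2 (Dset st st') x j → G.Adj a j → st'.2 j ≠ a → j < x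

lemma Post.glue {G : SimpleGraph (Fin (n+1))} {i s : Fin (n+1)} {cur out res : St n}
    (hs : s ∉ cur.1) (hadjs : G.Adj i s) (hi : i ∈ cur.1)
    (hpar : ∀ v, cur.2 v ∈ cur.1)
    (hlt : ∀ j, G.Adj i j → j ∉ cur.1 → j ≠ s → j < s)
    (Pc : Post G s (insert s cur.1, Function.update cur.2 s i) out)
    (Pr : Post G i out res) :
    Post G i cur res := by
  have hsub1 : cur.1 ⊆ insert s cur.1 := Finset.subset_insert _ _
  have hsub2 : insert s cur.1 ⊆ out.1 := Pc.mono
  have hsub3 : out.1 ⊆ res.1 := Pr.mono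
  have hsout : s ∈ out.1 := hsub2 (Finset.mem_insert_self _ _)
  have houts : out.2 s = i := by
    rw [Pc.stab s (Finset.mem_insert_self _ _)]
    simp
  have hress : res.2 s = i := by rw [Pr.stab s hsout, houts]
  set Ds := Dset (insert s cur.1, Function.update cur.2 s i) out with hDs
  set Dr := Dset out res with hDr
  set D := Dset cur res with hD
  have hDsD : Ds ⊆ D := by
    rintro v ⟨hv1, hv2⟩
    exact ⟨hsub3 hv1, fun h => hv2 (hsub1 h)⟩
  have hDrD : Dr ⊆ D := by
    rintro v ⟨hv1, hv2⟩
    exact ⟨hv1, fun h => hv2 (hsub2 (hsub1 h))⟩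
  have hsD : s ∈ D := ⟨hsub3 hsout, hs⟩
  have hdecomp : ∀ v ∈ D, v ∈ Dr ∨ v = s ∨ v ∈ Ds := by
    rintro v ⟨hv1, hv2⟩
    by_cases h1 : v ∈ out.1
    · by_cases h2 : v = s
      · exact Or.inr (Or.inl h2)
      · exact Or.inr (Or.inr ⟨h1, by simp [h2, hv2]⟩)
    · exact Or.inl ⟨hv1, h1⟩
  have hiD : i ∉ D := fun h => h.2 hi
  have htrans : ∀ {x j : Fin (n+1)}, j ∈ out.1 → DChain out.2 Ds x j →
      DChain res.2 Ds x j := by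
    intro x j hj h
    exact h.transfer (S := (↑out.1 : Set (Fin (n+1)))) (fun v hv => hv.1) hj
      (fun v hv => Pr.stab v hv)
  have htrans' : ∀ {x j : Fin (n+1)}, j ∈ out.1 → DChain res.2 Ds x j →
      DChain out.2 Ds x j := by
    intro x j hj h
    exact h.transfer (S := (↑out.1 : Set (Fin (n+1)))) (fun v hv => hv.1) hj
      (fun v hv => (Pr.stab v hv).symm)
  have hstab : ∀ v ∈ cur.1, res.2 v = cur.2 v := by
    intro v hv
    rw [Pr.stab v (hsub2 (hsub1 hv)), Pc.stab v (hsub1 hv)]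
    exact Function.update_of_ne (by rintro rfl; exact hs hv) _ _
  have cDs : ∀ v ∈ Ds, res.2 v ∈ Ds ∨ res.2 v = s := by
    intro v hv
    have := (htrans hv.1 (Pc.chain v hv.1 hv.2)).head
    tauto
  have cDr : ∀ v ∈ Dr, res.2 v ∈ Dr ∨ res.2 v = i := by
    intro v hv
    have := (Pr.chain v hv.1 hv.2).head
    tauto
  refine ⟨?_, ?_, Pr.parmem, ?_, ?_, Pr.nbr, ?_, ?_, ?_⟩
  · exact fun v hv => hsub3 (hsub2 (hsub1 hv))
  · exact hstab
  · -- adj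
    intro v hv1 hv2
    rcases hdecomp v ⟨hv1, hv2⟩ with h | h | h
    · exact Pr.adj v h.1 h.2
    · subst h; rw [hress]; exact hadjs
    · rw [Pr.stab v h.1]; exact Pc.adj v h.1 h.2
  · -- chain
    intro v hv1 hv2
    rcases hdecomp v ⟨hv1, hv2⟩ with h | h | h
    · exact (Pr.chain v h.1 h.2).mono hDrD
    · subst h
      exact ⟨1, one_pos, by simpa using hress, fun m h0 h1 => absurd h1 (by omega)⟩
    · exact ((htrans h.1 (Pc.chain v h.1 h.2)).extend hDsD hsD hress)
  · -- closure
    intro v hv1 hv2 w hw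
    rcases hdecomp v ⟨hv1, hv2⟩ with h | h | h
    · exact Pr.closure v h.1 h.2 w hw
    · subst h; exact hsub3 (Pc.nbr w hw)
    · exact hsub3 (Pc.closure v h.1 h.2 w hw)
  · -- comp
    intro u hu1 hu2 w hw1 hw2 huw
    have hclos : ∀ v, v = s ∨ v ∈ Ds → ∀ z, G.Adj v z → z ∈ out.1 := by
      rintro v (rfl | hv) z hz
      · exact Pc.nbr z hz
      · exact Pc.closure v hv.1 hv.2 z hz
    rcases hdecomp u ⟨hu1, hu2⟩ with h | h | h
    · rcases hdecomp w ⟨hw1, hw2⟩ with h' | h' | h'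
      · exact (Pr.comp u h.1 h.2 w h'.1 h'.2 huw).imp (fun c => c.mono hDrD)
          (fun c => c.mono hDrD)
      · exact absurd (hclos w (Or.inl h') u huw.symm) h.2
      · exact absurd (hclos w (Or.inr h') u huw.symm) h.2
    · rcases hdecomp w ⟨hw1, hw2⟩ with h' | h' | h'
      · exact absurd (hclos u (Or.inl h) w huw) h'.2
      · exact absurd (h ▸ h' ▸ huw.ne) (by simp)
      · subst h
        exact Or.inl (((htrans h'.1 (Pc.chain w h'.1 h'.2))).mono hDsD)
    · rcases hdecomp w ⟨hw1, hw2⟩ with h' | h' | h'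
      · exact absurd (hclos u (Or.inr h) w huw) h'.2
      · subst h'
        exact Or.inr (((htrans h.1 (Pc.chain u h.1 h.2))).mono hDsD)
      · exact ((Pc.comp u h.1 h.2 w h'.1 h'.2 huw).imp
          (fun c => (htrans h'.1 c).mono hDsD) (fun c => (htrans h.1 c).mono hDsD))
  · -- ord
    intro a x j ha hx hpx hj hch hadjaj hpj
    rcases hdecomp j hj with hjc | hjc | hjc
    · -- j in Dr
      have hnext : res.2 i ∉ D := by
        rw [hstab i hi]
        exact fun h => h.2 (hpar i)
      obtain ⟨hxc, hch'⟩ := hch.localize cDr hnext hx hjc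
      have hxDr : x ∈ Dr := by
        rcases hxc with h | h
        · exact h
        · exact absurd (h ▸ hx) hiD
      have hac : a = i ∨ a ∈ Dr := by
        rcases cDr x hxDr with h | h
        · exact Or.inr (hpx ▸ h)
        · exact Or.inl (hpx ▸ h)
      exact Pr.ord a x j hac hxDr hpx hjc hch' hadjaj hpj
    · -- j = s
      subst hjc
      obtain ⟨k, hk, hkx, hmid⟩ := hch
      rcases Nat.lt_or_ge 1 k with h' | h'
      · have := hmid 1 one_pos h'
        rw [Function.iterate_one, hress] at this
        exact absurd this hiD
      · have hk1 : k = 1 := le_antisymm h' hk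
        subst hk1
        rw [Function.iterate_one, hress] at hkx
        exact absurd (hkx ▸ hx) hiD
    · -- j in Ds
      have hnext : res.2 s ∉ D := hress ▸ hiD
      obtain ⟨hxc, hch'⟩ := hch.localize cDs hnext hx hjc
      rcases hxc with hxDs | hxs
      · -- x in Ds
        have hac : a = s ∨ a ∈ Ds := by
          rcases cDs x hxDs with h | h
          · exact Or.inr (hpx ▸ h)
          · exact Or.inl (hpx ▸ h)
        have hox : out.2 x = a := by rw [← Pr.stab x hxDs.1]; exact hpx
        have hoj : out.2 j ≠ a := by rw [← Pr.stab j hjc.1]; exact hpj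
        exact Pc.ord a x j hac hxDs hox hjc (htrans' hjc.1 hch') hadjaj hoj
      · -- x = s
        have hai : a = i := by rw [← hpx, hxs, hress]
        have hjs : j ≠ s := fun h => hjc.2 (by rw [h]; exact Finset.mem_insert_self _ _)
        have hlt' : j < s := hlt j (hai ▸ hadjaj) (fun h => hjc.2 (hsub1 h)) hjs
        rw [hxs]
        exact hlt'

lemma foldl_spec {G : SimpleGraph (Fin (n+1))} (fuel : ℕ)
    (IH : ∀ (j : Fin (n+1)) (st : St n), j ∈ st.1 → (∀ v, st.2 v ∈ st.1) →
      n + 2 ≤ fuel + st.1.card → Post G j st (dfsStep G fuel j st))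
    (i : Fin (n+1)) :
    ∀ (L : List (Fin (n+1))) (cur : St n), (∀ y ∈ L, G.Adj i y) → L.Pairwise (· > ·) →
    (∀ y, G.Adj i y → y ∉ cur.1 → y ∈ L) → i ∈ cur.1 → (∀ v, cur.2 v ∈ cur.1) →
    n + 2 ≤ fuel + 1 + cur.1.card →
    Post G i cur (L.foldl (fun st j => if j ∈ st.1 then st
      else dfsStep G fuel j (insert j st.1, Function.update st.2 j i)) cur)
  | [], cur, H1, H2, H3, Hi, Hpar, Hcard => by
    simp only [List.foldl_nil]
    have hD : ∀ v, v ∈ cur.1 → v ∉ cur.1 → False := fun v h h' => h' h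
    refine ⟨Finset.Subset.refl _, fun v _ => rfl, Hpar, ?_, ?_, ?_, ?_, ?_, ?_⟩
    · exact fun v h h' => absurd h h'
    · exact fun v h h' => absurd h h'
    · intro w hw
      by_contra h
      exact absurd (H3 w hw h) List.not_mem_nil
    · exact fun v h h' => absurd h h'
    · exact fun u h h' => absurd h h'
    · intro a x j _ hx
      exact absurd hx.1 hx.2
  | (s :: L'), cur, H1, H2, H3, Hi, Hpar, Hcard => by
    simp only [List.foldl_cons]
    by_cases hs : s ∈ cur.1
    · rw [if_pos hs]
      refine foldl_spec fuel IH i L' cur (fun y hy => H1 y (List.mem_cons_of_mem _ hy))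
        H2.of_cons ?_ Hi Hpar Hcard
      intro y hy hy'
      rcases List.mem_cons.mp (H3 y hy hy') with rfl | h
      · exact absurd hs hy'
      · exact h
    · rw [if_neg hs]
      have hadjs : G.Adj i s := H1 s List.mem_cons_self
      set stc : St n := (insert s cur.1, Function.update cur.2 s i) with hstc
      have hparc : ∀ v, stc.2 v ∈ stc.1 := by
        intro v
        by_cases h : v = s
        · subst h
          simp [hstc, Hi]
        · show Function.update cur.2 s i v ∈ _
          rw [Function.update_of_ne h]
          exact Finset.mem_insert_of_mem (Hpar v)
      have hcardc : n + 2 ≤ fuel + stc.1.card := by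
        have : stc.1.card = cur.1.card + 1 := Finset.card_insert_of_notMem hs
        omega
      have Pc := IH s stc (Finset.mem_insert_self _ _) hparc hcardc
      set out := dfsStep G fuel s stc with hout
      have hsubc : cur.1 ⊆ out.1 := fun v hv =>
        Pc.mono (Finset.mem_insert_of_mem hv)
      have Pr := foldl_spec fuel IH i L' out
        (fun y hy => H1 y (List.mem_cons_of_mem _ hy)) H2.of_cons
        (by
          intro y hy hy'
          rcases List.mem_cons.mp (H3 y hy (fun h => hy' (hsubc h))) with rfl | h
          · exact absurd (Pc.mono (Finset.mem_insert_self _ _)) hy'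
          · exact h)
        (hsubc Hi) Pc.parmem
        (by
          have := Finset.card_le_card hsubc
          omega)
      exact Post.glue hs hadjs Hi Hpar
        (fun j hj hj' hjs => (List.pairwise_cons.mp H2).1 j
          (by rcases List.mem_cons.mp (H3 j hj hj') with rfl | h
              · exact absurd rfl hjs
              · exact h))
        Pc Pr

lemma dfs_spec {G : SimpleGraph (Fin (n+1))} :
    ∀ (fuel : ℕ) (i : Fin (n+1)) (st : St n), i ∈ st.1 → (∀ v, st.2 v ∈ st.1) →
      n + 2 ≤ fuel + st.1.card → Post G i st (dfsStep G fuel i st) := by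
  intro fuel
  induction fuel with
  | zero =>
    intro i st hi hp hc
    exfalso
    have h1 : st.1.card ≤ n + 1 := by
      have := Finset.card_le_univ st.1
      simpa using this
    omega
  | succ fuel IHf =>
    intro i st hi hp hc
    show Post G i st ((nbrs G i).foldl _ st)
    exact foldl_spec fuel (fun j st hj hp hc => IHf j st hj hp hc) i (nbrs G i) st
      (fun y hy => mem_nbrs.mp hy) (nbrs_sorted G i)
      (fun y hy _ => mem_nbrs.mpr hy) hi hp hc

structure DfsFacts (X : SimpleGraph (Fin (n+1))) (r : Fin (n+1))
    (par : Fin (n+1) → Fin (n+1)) : Prop where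
  root : par r = r
  adjp : ∀ v, v ≠ r → X.Adj (par v) v
  reach : ∀ v, ∃ k, par^[k] v = r
  comp : ∀ u w, X.Adj u w →
    (∃ k, 0 < k ∧ par^[k] w = u) ∨ (∃ k, 0 < k ∧ par^[k] u = w)
  ord : ∀ a x j, par x = a → x ≠ r → (∃ k, 0 < k ∧ par^[k] j = x) →
    X.Adj a j → par j ≠ a → j < x

lemma dfs_facts (X : SimpleGraph (Fin (n+1))) (hX : X.Connected) (r : Fin (n+1)) :
    DfsFacts X r (PFG.dfsParent X r) := by
  classical
  set st0 : St n := ({r}, fun _ => r) with hst0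
  have P : Post X r st0 (dfsStep X (n+1) r st0) :=
    dfs_spec (n+1) r st0 (by simp [hst0]) (by simp [hst0]) (by simp [hst0])
  set fin := dfsStep X (n+1) r st0 with hfin
  have hpar : PFG.dfsParent X r = fin.2 := rfl
  have closed : ∀ u w, u ∈ fin.1 → X.Adj u w → w ∈ fin.1 := by
    intro u w hu ha
    by_cases h : u = r
    · exact P.nbr w (h ▸ ha)
    · exact P.closure u hu (by simp [hst0, h]) w ha
  have hwalk : ∀ (a b : Fin (n+1)), X.Walk a b → a ∈ fin.1 → b ∈ fin.1 := by
    intro a b p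
    induction p with
    | nil => exact id
    | cons h p ih => intro ha; exact ih (closed _ _ ha h)
  have huniv : ∀ w, w ∈ fin.1 := by
    intro w
    obtain ⟨p⟩ := hX.preconnected r w
    exact hwalk r w p (P.mono (by simp [hst0]))
  have hD : ∀ w, w ≠ r → w ∈ Dset st0 fin := by
    intro w hw
    exact ⟨huniv w, by simp [hst0, hw]⟩
  have hroot : fin.2 r = r := by
    have := P.stab r (by simp [hst0])
    simpa [hst0] using this
  rw [hpar]
  refine ⟨hroot, ?_, ?_, ?_, ?_⟩
  · intro v hv
    exact P.adj v (huniv v) (by simp [hst0, hv])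
  · intro v
    by_cases hv : v = r
    · exact ⟨0, by simp [hv]⟩
    · obtain ⟨k, hk, hkr, _⟩ := P.chain v (huniv v) (by simp [hst0, hv])
      exact ⟨k, hkr⟩
  · intro u w ha
    by_cases hu : u = r
    · subst hu
      obtain ⟨k, hk, hkr, _⟩ := P.chain w (huniv w) (by simp [hst0, ha.ne'])
      exact Or.inl ⟨k, hk, hkr⟩
    · by_cases hw : w = r
      · subst hw
        obtain ⟨k, hk, hkr, _⟩ := P.chain u (huniv u) (by simp [hst0, ha.ne])
        exact Or.inr ⟨k, hk, hkr⟩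
      · rcases P.comp u (huniv u) (by simp [hst0, hu]) w (huniv w) (by simp [hst0, hw]) ha with
          ⟨k, hk, hkr, _⟩ | ⟨k, hk, hkr, _⟩
        · exact Or.inl ⟨k, hk, hkr⟩
        · exact Or.inr ⟨k, hk, hkr⟩
  · intro a x j hpx hx hch hadj hpj
    obtain ⟨k, hk, hkx⟩ := hch
    have hjr : j ≠ r := by
      rintro rfl
      rw [Function.iterate_fixed hroot k] at hkx
      exact hx hkx.symm
    have hmid : ∀ m, 0 < m → m < k → fin.2^[m] j ∈ Dset st0 fin := by
      intro m h0 hm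
      refine ⟨huniv _, ?_⟩
      simp only [hst0, Finset.mem_singleton]
      intro h
      apply hx
      have h2 : fin.2^[(k-m) + m] j = fin.2^[k-m] (fin.2^[m] j) :=
        Function.iterate_add_apply _ _ _ _
      rw [h, Function.iterate_fixed hroot (k-m)] at h2
      have h3 : k - m + m = k := by omega
      rw [h3, hkx] at h2
      exact h2
    have haD : a = r ∨ a ∈ Dset st0 fin := by
      by_cases h : a = r
      · exact Or.inl h
      · exact Or.inr (hD a h)
    exact P.ord a x j haD (hD x hx) hpx (hD j hjr) ⟨k, hk, hkx, hmid⟩ hadj hpj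

lemma iter_split {par : Fin (n+1) → Fin (n+1)} {a : ℕ} (h : 0 < a) (x : Fin (n+1)) :
    par^[a] x = par^[a-1] (par x) := by
  conv_lhs => rw [show a = (a-1)+1 by omega]
  exact Function.iterate_succ_apply par (a-1) x

lemma iter_split' {par : Fin (n+1) → Fin (n+1)} {a : ℕ} (h : 0 < a) (x : Fin (n+1)) :
    par^[a] x = par (par^[a-1] x) := by
  conv_lhs => rw [show a = (a-1)+1 by omega]
  exact Function.iterate_succ_apply' par (a-1) x

lemma cycle_eq_root {X : SimpleGraph (Fin (n+1))} {r : Fin (n+1)}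
    {par : Fin (n+1) → Fin (n+1)} (F : DfsFacts X r par) :
    ∀ v k, 0 < k → par^[k] v = v → v = r := by
  intro v k hk hkv
  obtain ⟨m, hm⟩ := F.reach v
  have hmult : ∀ t, par^[k*t] v = v := by
    intro t
    induction t with
    | zero => simp
    | succ t ih =>
      have : k * (t+1) = k * t + k := by ring
      rw [this, Function.iterate_add_apply, hkv, ih]
  have h1 : par^[k*m] v = v := hmult m
  have hmk : m ≤ k * m := Nat.le_mul_of_pos_left m hk
  have h2 : k * m - m + m = k * m := by omega
  have h3 : par^[k*m] v = par^[k*m - m] (par^[m] v) := by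
    rw [← Function.iterate_add_apply, h2]
  rw [hm, Function.iterate_fixed F.root] at h3
  rw [h1] at h3
  exact h3

lemma count_edges {X : SimpleGraph (Fin (n+1))} {r : Fin (n+1)}
    {par : Fin (n+1) → Fin (n+1)} (F : DfsFacts X r par) :
    X.edgeSet.ncard = PFG.kappaNum X r par + n := by
  classical
  set E := X.edgeSet with hE
  have hEfin : E.Finite := Set.toFinite _
  set g : Fin (n+1) → Sym2 (Fin (n+1)) := fun v => s(par v, v) with hg
  set T : Set (Sym2 (Fin (n+1))) := g '' {v | v ≠ r} with hT
  have hTE : T ⊆ E := by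
    rintro e ⟨v, hv, rfl⟩
    exact F.adjp v hv
  have hginj : Set.InjOn g {v | v ≠ r} := by
    intro a ha b hb h
    simp only [hg, Sym2.eq_iff] at h
    rcases h with ⟨h1, h2⟩ | ⟨h1, h2⟩
    · exact h2
    · exfalso
      have : par^[2] a = a := by
        show par (par a) = a
        rw [h1, ← h2]
      exact ha (cycle_eq_root F a 2 two_pos this)
  have hTcard : T.ncard = n := by
    rw [hT, Set.ncard_image_of_injOn hginj]
    have heq : {v : Fin (n+1) | v ≠ r} = (Set.univ : Set (Fin (n+1))) \ {r} := by
      ext x; simp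
    rw [heq, Set.ncard_diff_singleton_of_mem (Set.mem_univ r), Set.ncard_univ]
    simp
  have hsplit : (E \ T).ncard + T.ncard = E.ncard :=
    Set.ncard_diff_add_ncard_of_subset hTE hEfin
  set K := {p : Fin (n+1) × Fin (n+1) | PFG.IsKappaInversion X r par p.1 p.2} with hK
  set f : Fin (n+1) × Fin (n+1) → Sym2 (Fin (n+1)) := fun p => s(par p.1, p.2) with hf
  have hmapsto : ∀ p ∈ K, f p ∈ E \ T := by
    rintro ⟨i, j⟩ ⟨⟨k, hk, hki⟩, hji, hir, hadj⟩
    constructor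
    · exact hadj
    · rintro ⟨w, hw, hew⟩
      have hew' : s(par i, j) = s(par w, w) := hew.symm
      rw [Sym2.eq_iff] at hew'
      rcases hew' with ⟨h1, h2⟩ | ⟨h1, h2⟩
      · -- j = w and par i = par w, so par j = par i
        have hpj : par j = par i := by rw [h2, h1]
        have hcyc : par^[k] (par j) = par j := by
          have h3 : par^[k+1] j = par^[k] (par j) := Function.iterate_succ_apply _ _ _
          have h4 : par^[k+1] j = par (par^[k] j) := Function.iterate_succ_apply' _ _ _
          rw [hki] at h4
          rw [h4, ← hpj] at h3
          exact h3.symm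
        have hpjr : par j = r := cycle_eq_root F (par j) k hk hcyc
        apply hir
        have h5 : par^[k] j = par^[k-1] (par j) := iter_split hk j
        rw [h5, hpjr, Function.iterate_fixed F.root] at hki
        exact hki.symm
      · -- par i = w, j = par w = par (par i)
        exfalso
        have : par^[k+2] i = i := by
          have h3 : par^[k+2] i = par^[k] (par^[2] i) := by
            rw [show k + 2 = k + 2 from rfl]
            exact Function.iterate_add_apply par k 2 i
          have h4 : par^[2] i = j := by
            show par (par i) = j
            rw [h1, ← h2]
          rw [h4, hki] at h3
          exact h3
        exact hir (cycle_eq_root F i (k+2) (by omega) this)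
  have hinj : Set.InjOn f K := by
    rintro ⟨i, j⟩ ⟨⟨k, hk, hki⟩, _, hir, _⟩ ⟨i', j'⟩ ⟨⟨k', hk', hki'⟩, _, hir', _⟩ h
    have h' : s(par i, j) = s(par i', j') := h
    rw [Sym2.eq_iff] at h'
    have haux : ∀ (b b' : Fin (n+1)) (m m' : ℕ) (z : Fin (n+1)), 0 < m → 0 < m' → m ≤ m' →
        par^[m] z = b → par^[m'] z = b' → par b = par b' → b' ≠ r → b = b' := by
      intro b b' m m' z hm hm' hmm hb hb' hpp hbr
      have hd : par^[m'-m] b = b' := by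
        rw [← hb, ← Function.iterate_add_apply, show m' - m + m = m' by omega, hb']
      rcases Nat.eq_zero_or_pos (m' - m) with h0 | h0
      · rw [h0] at hd; simpa using hd
      · exfalso
        have hcyc : par^[m'-m] (par b) = par b := by
          have e1 : par^[m'-m+1] b = par (par^[m'-m] b) := Function.iterate_succ_apply' _ _ _
          have e2 : par^[m'-m+1] b = par^[m'-m] (par b) := Function.iterate_succ_apply _ _ _
          rw [hd, ← hpp] at e1
          rw [e1] at e2
          exact e2.symm
        have hpbr : par b = r := cycle_eq_root F (par b) _ h0 hcyc
        apply hbr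
        rw [iter_split h0 b, hpbr, Function.iterate_fixed F.root] at hd
        exact hd.symm
    rcases h' with ⟨h1, h2⟩ | ⟨h1, h2⟩
    · subst h2
      rcases le_total k k' with hle | hle
      · have := haux i i' k k' j hk hk' hle hki hki' h1 hir'
        simp [this]
      · have := haux i' i k' k j hk' hk hle hki' hki h1.symm hir
        simp [this]
    · exfalso
      have e1 : par^[k+1] i' = i := by
        rw [Function.iterate_succ_apply, ← h2, hki]
      have e2 : par^[k'+1] i = i' := by
        rw [Function.iterate_succ_apply, h1, hki']
      have : par^[(k+1)+(k'+1)] i = i := by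
        rw [Function.iterate_add_apply, e2, e1]
      exact hir (cycle_eq_root F i _ (by omega) this)
  have himg : f '' K = E \ T := by
    apply Set.Subset.antisymm
    · rintro e ⟨p, hp, rfl⟩
      exact hmapsto p hp
    · intro e he
      have key : ∀ u w : Fin (n+1), X.Adj u w → (∃ k, 0 < k ∧ par^[k] w = u) →
          s(u,w) ∉ T → s(u,w) ∈ f '' K := by
        intro u w huw hex hsT
        have hwr : w ≠ r := by
          rintro rfl
          obtain ⟨k, hk, hku⟩ := hex
          rw [Function.iterate_fixed F.root] at hku
          exact X.irrefl (hku ▸ huw)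
        have hpw : par w ≠ u := by
          intro h
          exact hsT ⟨w, hwr, by rw [show g w = s(par w, w) from rfl, h]⟩
        obtain ⟨hk0pos, hk0⟩ := Nat.find_spec hex
        have hkne1 : Nat.find hex ≠ 1 := by
          intro h
          rw [h, Function.iterate_one] at hk0
          exact hpw hk0
        have hk02 : 2 ≤ Nat.find hex := by omega
        set i := par^[Nat.find hex - 1] w with hi
        have hpi : par i = u := by
          have h1 := iter_split' (par := par) (a := Nat.find hex) (by omega) w
          rw [hi, ← h1]
          exact hk0
        have hir : i ≠ r := by
          intro h
          have hur : u = r := by rw [← hpi, h, F.root]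
          have hmin := Nat.find_min hex (show Nat.find hex - 1 < Nat.find hex by omega)
          exact hmin ⟨by omega, by rw [← hi, h, hur]⟩
        have hanc : ∃ k, 0 < k ∧ par^[k] w = i := ⟨Nat.find hex - 1, by omega, hi.symm⟩
        have hlt : w < i := F.ord u i w hpi hir hanc huw hpw
        refine ⟨(i, w), ⟨hanc, hlt, hir, by rw [hpi]; exact huw⟩, ?_⟩
        show s(par i, w) = s(u, w)
        rw [hpi]
      obtain ⟨he1, he2⟩ := he
      revert he1 he2
      refine Sym2.inductionOn e ?_
      intro u w he1 he2
      have huw : X.Adj u w := he1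
      rcases F.comp u w huw with hcase | hcase
      · exact key u w huw hcase he2
      · have hsw : s(u,w) = s(w,u) := Sym2.eq_swap
        rw [hsw] at he2 ⊢
        exact key w u huw.symm hcase he2
  have hKcard : (E \ T).ncard = K.ncard := by
    rw [← himg, Set.ncard_image_of_injOn hinj]
  have hkappa : PFG.kappaNum X r par = K.ncard := rfl
  rw [hkappa, ← hKcard, ← hsplit, hTcard]

end PFGAux

/-- If `H` is a connected graph obtained from `G` by deleting an edge of
`DFS(G)`, then `κ(H, DFS(H)) = g - 1` where `g = |E(G)| - |V(G)| + 1`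
(stated additively: `κ(H, DFS(H)) + |V| = |E(G)|`). -/
theorem kappa_dfs_delete_edge {n : ℕ}
    (G : SimpleGraph (Fin (n+1))) (hG : G.Connected) (r : Fin (n+1))
    (v : Fin (n+1)) (hv : v ≠ r)
    (H : SimpleGraph (Fin (n+1)))
    (hH : H = G.deleteEdges {s(PFG.dfsParent G r v, v)})
    (hHconn : H.Connected) :
    PFG.kappaNum H r (PFG.dfsParent H r) + (n + 1) = G.edgeSet.ncard := by
  have FG := PFGAux.dfs_facts G hG r
  have FH := PFGAux.dfs_facts H hHconn r
  have hcnt : H.edgeSet.ncard = PFG.kappaNum H r (PFG.dfsParent H r) + n :=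
    PFGAux.count_edges FH
  have he0 : s(PFG.dfsParent G r v, v) ∈ G.edgeSet := FG.adjp v hv
  have hHE : H.edgeSet = G.edgeSet \ {s(PFG.dfsParent G r v, v)} := by
    rw [hH, SimpleGraph.edgeSet_deleteEdges]
  have hdiff : (G.edgeSet \ {s(PFG.dfsParent G r v, v)}).ncard + 1 = G.edgeSet.ncard :=
    Set.ncard_diff_singleton_add_one he0 (Set.toFinite _)
  rw [← hdiff, ← hHE, hcnt]
  omega
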